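/- arXiv:2405.00658 — 2 statements merged into one kernel-verified Lean document; each statement's English description precedes it below -/
import Mathlib

section
/- Let κ be a positive integer, let t₁, t₂ be real numbers, let x₁, x₂ ≥ 2, and for j = 1, 2 let f_j : ℕ → ℂ satisfy |f_j(n)| ≤ τ(n)^κ for all n ≥ 1. Then D_κ(f₁, n^{it₁}; x₁) + D_κ(f₂, n^{it₂}; x₂) ≥ 2^{−κ/2} · D_{2κ}(f₁ f₂, n^{i(t₁+t₂)}; min{x₁, x₂}), where f₁ f₂ denotes the pointwise product n ↦ f₁(n) f₂(n). -/
open Complex Finset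

/-- `dnum n` is the number of positive divisors of `n`, i.e. `τ(n)`. -/
def dnum (n : ℕ) : ℕ := n.divisors.card

/-- Square of the distance `D_m(f, n^{it}; x)`:
`∑_{p ≤ x, p prime} (2^m − Re(f(p) p^{−it}))/p`. -/
noncomputable def Dsq (m : ℕ) (f : ℕ → ℂ) (t : ℝ) (x : ℝ) : ℝ :=
  ∑ p ∈ (Finset.Icc 1 ⌊x⌋₊).filter Nat.Prime,
    ((2 : ℝ) ^ m - (f p * (p : ℂ) ^ (-(I * (t : ℂ)))).re) / p

/-- The distance `D_m(f, n^{it}; x) ≥ 0`. -/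
noncomputable def DistFn (m : ℕ) (f : ℕ → ℂ) (t : ℝ) (x : ℝ) : ℝ :=
  Real.sqrt (Dsq m f t x)

lemma dnum_prime {p : ℕ} (hp : p.Prime) : dnum p = 2 := by
  rw [dnum, hp.divisors, Finset.card_insert_of_notMem (by simp [hp.one_lt.ne]),
    Finset.card_singleton]

lemma norm_twist {p : ℕ} (hp : 0 < p) (t : ℝ) : ‖(p:ℂ) ^ (-(I * (t:ℂ)))‖ = 1 := by
  rw [show ((p:ℂ)) = ((p:ℝ):ℂ) by push_cast; ring,
    Complex.norm_cpow_eq_rpow_re_of_pos (by positivity)]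
  simp

lemma key_ineq (M : ℝ) (hM : 0 < M) (Z W : ℂ) (hZ : ‖Z‖ ≤ M) (hW : ‖W‖ ≤ M) :
    M^2 - (Z*W).re ≤ (Real.sqrt (M*(M - Z.re)) + Real.sqrt (M*(M - W.re)))^2 := by
  have hZr : Z.re ≤ M := le_trans (Complex.re_le_norm Z) hZ
  have hWr : W.re ≤ M := le_trans (Complex.re_le_norm W) hW
  have hZn : ‖Z‖^2 = Z.re^2 + Z.im^2 := by
    rw [Complex.sq_norm, Complex.normSq_apply]; ring
  have hWn : ‖W‖^2 = W.re^2 + W.im^2 := by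
    rw [Complex.sq_norm, Complex.normSq_apply]; ring
  have hZim : Z.im^2 ≤ M^2 - Z.re^2 := by nlinarith [norm_nonneg Z]
  have hWim : W.im^2 ≤ M^2 - W.re^2 := by nlinarith [norm_nonneg W]
  set s := Real.sqrt (M*(M - Z.re)) with hs
  set u := Real.sqrt (M*(M - W.re)) with hu
  have hs0 : 0 ≤ s := Real.sqrt_nonneg _
  have hu0 : 0 ≤ u := Real.sqrt_nonneg _
  have hs2 : s^2 = M*(M - Z.re) := Real.sq_sqrt (by nlinarith)
  have hu2 : u^2 = M*(M - W.re) := Real.sq_sqrt (by nlinarith)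
  have hZs : Z.im^2 ≤ 2*s^2 := by nlinarith
  have hWu : W.im^2 ≤ 2*u^2 := by nlinarith
  have key : Z.im * W.im ≤ 2*s*u := by
    nlinarith [sq_nonneg (Z.im*u - W.im*s), sq_nonneg (Z.im*u + W.im*s), mul_nonneg hs0 hu0,
      mul_nonneg (mul_nonneg hs0 hs0) (mul_nonneg hu0 hu0)]
  have hmul : (Z*W).re = Z.re*W.re - Z.im*W.im := by simp [Complex.mul_re]
  nlinarith [mul_nonneg (by linarith : (0:ℝ) ≤ M - Z.re) (by linarith : (0:ℝ) ≤ M - W.re)]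

theorem stmt10 (κ : ℕ) (hκ : 0 < κ) (t₁ t₂ x₁ x₂ : ℝ) (hx₁ : 2 ≤ x₁) (hx₂ : 2 ≤ x₂)
    (f₁ f₂ : ℕ → ℂ)
    (hf₁ : ∀ n : ℕ, 1 ≤ n → ‖f₁ n‖ ≤ (dnum n : ℝ) ^ κ)
    (hf₂ : ∀ n : ℕ, 1 ≤ n → ‖f₂ n‖ ≤ (dnum n : ℝ) ^ κ) :
    (2 : ℝ) ^ (-(κ : ℝ) / 2) *
        DistFn (2 * κ) (fun n => f₁ n * f₂ n) (t₁ + t₂) (min x₁ x₂) ≤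
      DistFn κ f₁ t₁ x₁ + DistFn κ f₂ t₂ x₂ := by
  classical
  set M : ℝ := (2:ℝ)^κ with hM
  have hM0 : 0 < M := by positivity
  -- summand functions
  set a : ℕ → ℝ := fun p => ((2:ℝ)^κ - (f₁ p * (p:ℂ) ^ (-(I * (t₁:ℂ)))).re) / p with ha
  set b : ℕ → ℝ := fun p => ((2:ℝ)^κ - (f₂ p * (p:ℂ) ^ (-(I * (t₂:ℂ)))).re) / p with hb
  set S := (Finset.Icc 1 ⌊min x₁ x₂⌋₊).filter Nat.Prime with hS
  set S₁ := (Finset.Icc 1 ⌊x₁⌋₊).filter Nat.Prime with hS₁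
  set S₂ := (Finset.Icc 1 ⌊x₂⌋₊).filter Nat.Prime with hS₂
  have hSsub₁ : S ⊆ S₁ :=
    Finset.filter_subset_filter _ (Finset.Icc_subset_Icc le_rfl
      (Nat.floor_le_floor (min_le_left _ _)))
  have hSsub₂ : S ⊆ S₂ :=
    Finset.filter_subset_filter _ (Finset.Icc_subset_Icc le_rfl
      (Nat.floor_le_floor (min_le_right _ _)))
  -- norm bounds at primes
  have hnormZ : ∀ p : ℕ, p.Prime → ‖f₁ p * (p:ℂ) ^ (-(I * (t₁:ℂ)))‖ ≤ M := by
    intro p hp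
    rw [norm_mul, norm_twist hp.pos]
    simpa [dnum_prime hp] using hf₁ p hp.one_lt.le
  have hnormW : ∀ p : ℕ, p.Prime → ‖f₂ p * (p:ℂ) ^ (-(I * (t₂:ℂ)))‖ ≤ M := by
    intro p hp
    rw [norm_mul, norm_twist hp.pos]
    simpa [dnum_prime hp] using hf₂ p hp.one_lt.le
  -- nonnegativity of summands
  have hA0 : ∀ p ∈ S₁, 0 ≤ a p := by
    intro p hp
    have hpp : p.Prime := (Finset.mem_filter.mp hp).2
    have := (Complex.re_le_norm _).trans (hnormZ p hpp)
    have hp0 : (0:ℝ) < p := by exact_mod_cast hpp.pos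
    apply div_nonneg _ hp0.le
    rw [hM] at this
    linarith
  have hB0 : ∀ p ∈ S₂, 0 ≤ b p := by
    intro p hp
    have hpp : p.Prime := (Finset.mem_filter.mp hp).2
    have := (Complex.re_le_norm _).trans (hnormW p hpp)
    have hp0 : (0:ℝ) < p := by exact_mod_cast hpp.pos
    apply div_nonneg _ hp0.le
    rw [hM] at this
    linarith
  -- pointwise bound on S
  have hpt : ∀ p ∈ S,
      ((2:ℝ)^(2*κ) - ((f₁ p * f₂ p) * (p:ℂ) ^ (-(I * ((t₁ + t₂ : ℝ):ℂ)))).re) / p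
        ≤ M * (Real.sqrt (a p) + Real.sqrt (b p))^2 := by
    intro p hp
    have hpp : p.Prime := (Finset.mem_filter.mp hp).2
    have hp0 : (0:ℝ) < p := by exact_mod_cast hpp.pos
    have hpc : (p:ℂ) ≠ 0 := by exact_mod_cast hpp.pos.ne'
    set Z := f₁ p * (p:ℂ) ^ (-(I * (t₁:ℂ))) with hZ
    set W := f₂ p * (p:ℂ) ^ (-(I * (t₂:ℂ))) with hW
    have hsplit : (f₁ p * f₂ p) * (p:ℂ) ^ (-(I * ((t₁ + t₂ : ℝ):ℂ))) = Z * W := by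
      rw [hZ, hW, show -(I * ((t₁ + t₂ : ℝ):ℂ)) = -(I * (t₁:ℂ)) + -(I * (t₂:ℂ)) by
        push_cast; ring, Complex.cpow_add _ _ hpc]
      ring
    have hkey := key_ineq M hM0 Z W (hnormZ p hpp) (hnormW p hpp)
    have hM2 : (2:ℝ)^(2*κ) = M^2 := by rw [hM, ← pow_mul, mul_comm]
    rw [hsplit, hM2, div_le_iff₀ hp0]
    calc M^2 - (Z*W).re ≤ (Real.sqrt (M*(M - Z.re)) + Real.sqrt (M*(M - W.re)))^2 := hkey
      _ = M * (Real.sqrt (a p) + Real.sqrt (b p))^2 * p := by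
        have hap : a p = (M - Z.re)/(p:ℝ) := rfl
        have hbp : b p = (M - W.re)/(p:ℝ) := rfl
        have e1 : M*(M - Z.re) = (M * p) * a p := by
          rw [hap]; field_simp
        have e2 : M*(M - W.re) = (M * p) * b p := by
          rw [hbp]; field_simp
        rw [e1, e2, Real.sqrt_mul (mul_nonneg hM0.le hp0.le) (a p),
          Real.sqrt_mul (mul_nonneg hM0.le hp0.le) (b p), ← mul_add, mul_pow,
          Real.sq_sqrt (mul_nonneg hM0.le hp0.le)]
        ring
  -- Cauchy-Schwarz step
  have hCS : ∑ p ∈ S, Real.sqrt (a p) * Real.sqrt (b p)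
      ≤ Real.sqrt (∑ p ∈ S, a p) * Real.sqrt (∑ p ∈ S, b p) := by
    have h := Finset.sum_mul_sq_le_sq_mul_sq S (fun p => Real.sqrt (a p))
      (fun p => Real.sqrt (b p))
    have hsum0 : 0 ≤ ∑ p ∈ S, Real.sqrt (a p) * Real.sqrt (b p) :=
      Finset.sum_nonneg fun p _ => mul_nonneg (Real.sqrt_nonneg _) (Real.sqrt_nonneg _)
    have e1 : ∑ p ∈ S, Real.sqrt (a p)^2 = ∑ p ∈ S, a p :=
      Finset.sum_congr rfl fun p hp => Real.sq_sqrt (hA0 p (hSsub₁ hp))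
    have e2 : ∑ p ∈ S, Real.sqrt (b p)^2 = ∑ p ∈ S, b p :=
      Finset.sum_congr rfl fun p hp => Real.sq_sqrt (hB0 p (hSsub₂ hp))
    rw [e1, e2] at h
    calc ∑ p ∈ S, Real.sqrt (a p) * Real.sqrt (b p)
        = Real.sqrt ((∑ p ∈ S, Real.sqrt (a p) * Real.sqrt (b p))^2) :=
          (Real.sqrt_sq hsum0).symm
      _ ≤ Real.sqrt ((∑ p ∈ S, a p) * (∑ p ∈ S, b p)) := Real.sqrt_le_sqrt h
      _ = Real.sqrt (∑ p ∈ S, a p) * Real.sqrt (∑ p ∈ S, b p) := Real.sqrt_mul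
          (Finset.sum_nonneg fun p hp => hA0 p (hSsub₁ hp)) _
  -- sums over S bounded by full sums
  have hsubA : ∑ p ∈ S, a p ≤ Dsq κ f₁ t₁ x₁ :=
    Finset.sum_le_sum_of_subset_of_nonneg hSsub₁ fun p hp _ => hA0 p hp
  have hsubB : ∑ p ∈ S, b p ≤ Dsq κ f₂ t₂ x₂ :=
    Finset.sum_le_sum_of_subset_of_nonneg hSsub₂ fun p hp _ => hB0 p hp
  -- combine
  have hC : Dsq (2*κ) (fun n => f₁ n * f₂ n) (t₁+t₂) (min x₁ x₂)
      ≤ M * (DistFn κ f₁ t₁ x₁ + DistFn κ f₂ t₂ x₂)^2 := by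
    have step1 : Dsq (2*κ) (fun n => f₁ n * f₂ n) (t₁+t₂) (min x₁ x₂)
        ≤ ∑ p ∈ S, M * (Real.sqrt (a p) + Real.sqrt (b p))^2 :=
      Finset.sum_le_sum hpt
    have step2 : ∑ p ∈ S, M * (Real.sqrt (a p) + Real.sqrt (b p))^2
        ≤ M * (Real.sqrt (∑ p ∈ S, a p) + Real.sqrt (∑ p ∈ S, b p))^2 := by
      rw [← Finset.mul_sum]
      apply mul_le_mul_of_nonneg_left _ hM0.le
      have expand : ∀ p ∈ S, (Real.sqrt (a p) + Real.sqrt (b p))^2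
          = a p + b p + 2 * (Real.sqrt (a p) * Real.sqrt (b p)) := by
        intro p hp
        rw [add_sq, Real.sq_sqrt (hA0 p (hSsub₁ hp)), Real.sq_sqrt (hB0 p (hSsub₂ hp))]
        ring
      rw [Finset.sum_congr rfl expand]
      rw [add_sq, Real.sq_sqrt (Finset.sum_nonneg fun p hp => hA0 p (hSsub₁ hp)),
        Real.sq_sqrt (Finset.sum_nonneg fun p hp => hB0 p (hSsub₂ hp))]
      rw [Finset.sum_add_distrib, Finset.sum_add_distrib, ← Finset.mul_sum]
      linarith [hCS]
    have step3 : (Real.sqrt (∑ p ∈ S, a p) + Real.sqrt (∑ p ∈ S, b p))^2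
        ≤ (DistFn κ f₁ t₁ x₁ + DistFn κ f₂ t₂ x₂)^2 := by
      apply pow_le_pow_left₀ (by positivity)
      exact add_le_add (Real.sqrt_le_sqrt hsubA) (Real.sqrt_le_sqrt hsubB)
    calc Dsq (2*κ) (fun n => f₁ n * f₂ n) (t₁+t₂) (min x₁ x₂)
        ≤ ∑ p ∈ S, M * (Real.sqrt (a p) + Real.sqrt (b p))^2 := step1
      _ ≤ M * (Real.sqrt (∑ p ∈ S, a p) + Real.sqrt (∑ p ∈ S, b p))^2 := step2
      _ ≤ M * (DistFn κ f₁ t₁ x₁ + DistFn κ f₂ t₂ x₂)^2 :=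
          mul_le_mul_of_nonneg_left step3 hM0.le
  -- take square roots
  have hD : DistFn (2*κ) (fun n => f₁ n * f₂ n) (t₁+t₂) (min x₁ x₂)
      ≤ Real.sqrt M * (DistFn κ f₁ t₁ x₁ + DistFn κ f₂ t₂ x₂) := by
    rw [DistFn]
    calc Real.sqrt (Dsq (2*κ) (fun n => f₁ n * f₂ n) (t₁+t₂) (min x₁ x₂))
        ≤ Real.sqrt (M * (DistFn κ f₁ t₁ x₁ + DistFn κ f₂ t₂ x₂)^2) :=
          Real.sqrt_le_sqrt hC
      _ = Real.sqrt M * (DistFn κ f₁ t₁ x₁ + DistFn κ f₂ t₂ x₂) := by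
          have hDnn : (0:ℝ) ≤ DistFn κ f₁ t₁ x₁ + DistFn κ f₂ t₂ x₂ :=
            add_nonneg (Real.sqrt_nonneg _) (Real.sqrt_nonneg _)
          rw [Real.sqrt_mul hM0.le, Real.sqrt_sq hDnn]
  -- final rpow algebra
  have hsqrtM : Real.sqrt M = (2:ℝ) ^ ((κ:ℝ)/2) := by
    rw [hM, Real.sqrt_eq_rpow, ← Real.rpow_natCast (2:ℝ) κ,
      ← Real.rpow_mul (by norm_num)]
    congr 1
    ring
  have h2 : (0:ℝ) < (2:ℝ) ^ (-(κ:ℝ)/2) := Real.rpow_pos_of_pos (by norm_num) _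
  calc (2:ℝ) ^ (-(κ:ℝ)/2) * DistFn (2*κ) (fun n => f₁ n * f₂ n) (t₁+t₂) (min x₁ x₂)
      ≤ (2:ℝ) ^ (-(κ:ℝ)/2) * (Real.sqrt M * (DistFn κ f₁ t₁ x₁ + DistFn κ f₂ t₂ x₂)) :=
        mul_le_mul_of_nonneg_left hD h2.le
    _ = DistFn κ f₁ t₁ x₁ + DistFn κ f₂ t₂ x₂ := by
        rw [hsqrtM, ← mul_assoc, ← Real.rpow_add (by norm_num)]
        rw [show -(κ:ℝ)/2 + (κ:ℝ)/2 = 0 by ring, Real.rpow_zero, one_mul]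
end

section
/- Let κ be a positive integer, let t₁, t₂ be real numbers, let x₁, x₂ ≥ 2, and for j = 1, 2 let f_j : ℕ → ℂ satisfy |f_j(n)| ≤ τ(n)^κ for all n ≥ 1. Then D_{2κ}(f₁ f₂, n^{i(t₁+t₂)}; min{x₁, x₂})² ≤ 2^{κ+2} · max{ D_κ(f₁, n^{it₁}; x₁)², D_κ(f₂, n^{it₂}; x₂)² }, where f₁ f₂ denotes the pointwise product n ↦ f₁(n) f₂(n). -/
open Complex Finset

lemma key2 (M : ℝ) (hM : 0 < M) (z₁ z₂ : ℂ) (h₁ : ‖z₁‖ ≤ M) (h₂ : ‖z₂‖ ≤ M) :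
    M ^ 2 - (z₁ * z₂).re ≤ 2 * M * ((M - z₁.re) + (M - z₂.re)) := by
  have e₁ : z₁.re * z₁.re + z₁.im * z₁.im ≤ M ^ 2 := by
    have h' : ‖z₁‖ ^ 2 ≤ M ^ 2 := pow_le_pow_left₀ (norm_nonneg _) h₁ 2
    rwa [Complex.sq_norm, Complex.normSq_apply] at h'
  have e₂ : z₂.re * z₂.re + z₂.im * z₂.im ≤ M ^ 2 := by
    have h' : ‖z₂‖ ^ 2 ≤ M ^ 2 := pow_le_pow_left₀ (norm_nonneg _) h₂ 2
    rwa [Complex.sq_norm, Complex.normSq_apply] at h'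
  rw [Complex.mul_re]
  nlinarith [sq_nonneg (z₁.im - z₂.im), sq_nonneg (z₁.re + z₂.re - 2 * M)]

lemma norm_cpow_neg_I_mul (p : ℕ) (hp : 0 < p) (t : ℝ) :
    ‖(p : ℂ) ^ (-(I * (t : ℂ)))‖ = 1 := by
  have hp' : (0 : ℝ) < (p : ℝ) := by exact_mod_cast hp
  have : ((p : ℂ)) = (((p : ℝ) : ℂ)) := by push_cast; ring
  rw [this, Complex.norm_cpow_eq_rpow_re_of_pos hp']
  simp

theorem stmt13 (κ : ℕ) (hκ : 0 < κ) (t₁ t₂ x₁ x₂ : ℝ) (hx₁ : 2 ≤ x₁) (hx₂ : 2 ≤ x₂)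
    (f₁ f₂ : ℕ → ℂ)
    (hf₁ : ∀ n : ℕ, 1 ≤ n → ‖f₁ n‖ ≤ (dnum n : ℝ) ^ κ)
    (hf₂ : ∀ n : ℕ, 1 ≤ n → ‖f₂ n‖ ≤ (dnum n : ℝ) ^ κ) :
    Dsq (2 * κ) (fun n => f₁ n * f₂ n) (t₁ + t₂) (min x₁ x₂) ≤
      (2 : ℝ) ^ (κ + 2) * max (Dsq κ f₁ t₁ x₁) (Dsq κ f₂ t₂ x₂) := by
  set M : ℝ := (2 : ℝ) ^ κ with hMdef
  have hMpos : (0 : ℝ) < M := by positivity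
  -- dnum of a prime is 2
  have hdnum : ∀ p : ℕ, p.Prime → dnum p = 2 := by
    intro p hp
    rw [dnum, hp.divisors]
    rw [Finset.card_insert_of_notMem (by simp [hp.one_lt.ne]), Finset.card_singleton]
  -- norm bound at primes
  have hbound : ∀ (f : ℕ → ℂ), (∀ n : ℕ, 1 ≤ n → ‖f n‖ ≤ (dnum n : ℝ) ^ κ) →
      ∀ (t : ℝ) (p : ℕ), p.Prime → ‖f p * (p : ℂ) ^ (-(I * (t : ℂ)))‖ ≤ M := by
    intro f hf t p hp
    rw [norm_mul, norm_cpow_neg_I_mul p hp.pos, mul_one]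
    have := hf p hp.one_lt.le
    rwa [hdnum p hp] at this
    
  -- termwise nonnegativity
  have hterm_nonneg : ∀ (f : ℕ → ℂ), (∀ n : ℕ, 1 ≤ n → ‖f n‖ ≤ (dnum n : ℝ) ^ κ) →
      ∀ (t : ℝ) (p : ℕ), p.Prime →
      0 ≤ ((2 : ℝ) ^ κ - (f p * (p : ℂ) ^ (-(I * (t : ℂ)))).re) / p := by
    intro f hf t p hp
    apply div_nonneg _ (Nat.cast_nonneg p)
    have h1 := hbound f hf t p hp
    have h2 := Complex.re_le_norm (f p * (p : ℂ) ^ (-(I * (t : ℂ))))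
    linarith
  -- monotonicity in x
  have hmono : ∀ (f : ℕ → ℂ), (∀ n : ℕ, 1 ≤ n → ‖f n‖ ≤ (dnum n : ℝ) ^ κ) →
      ∀ (t : ℝ) (x : ℝ), min x₁ x₂ ≤ x → Dsq κ f t (min x₁ x₂) ≤ Dsq κ f t x := by
    intro f hf t x hx
    apply Finset.sum_le_sum_of_subset_of_nonneg
    · apply Finset.filter_subset_filter
      apply Finset.Icc_subset_Icc le_rfl (Nat.floor_le_floor hx)
    · intro p hp _
      rw [Finset.mem_filter] at hp
      exact hterm_nonneg f hf t p hp.2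
  set S := (Finset.Icc 1 ⌊min x₁ x₂⌋₊).filter Nat.Prime with hS
  -- step A: termwise bound on the min sum
  have stepA : Dsq (2 * κ) (fun n => f₁ n * f₂ n) (t₁ + t₂) (min x₁ x₂) ≤
      2 ^ (κ + 1) * (Dsq κ f₁ t₁ (min x₁ x₂) + Dsq κ f₂ t₂ (min x₁ x₂)) := by
    rw [Dsq, Dsq, Dsq, ← Finset.sum_add_distrib, Finset.mul_sum]
    apply Finset.sum_le_sum
    intro p hp
    rw [Finset.mem_filter] at hp
    obtain ⟨-, hpp⟩ := hp
    have hppos : (0 : ℝ) < (p : ℝ) := by exact_mod_cast hpp.pos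
    have hsplit : (fun n => f₁ n * f₂ n) p * (p : ℂ) ^ (-(I * ((t₁ + t₂ : ℝ) : ℂ))) =
        (f₁ p * (p : ℂ) ^ (-(I * (t₁ : ℂ)))) * (f₂ p * (p : ℂ) ^ (-(I * (t₂ : ℂ)))) := by
      have hp0 : ((p : ℂ)) ≠ 0 := Nat.cast_ne_zero.mpr hpp.pos.ne'
      have he : (-(I * ((t₁ + t₂ : ℝ) : ℂ))) = (-(I * (t₁ : ℂ))) + (-(I * (t₂ : ℂ))) := by
        push_cast; ring
      rw [he, Complex.cpow_add _ _ hp0]; ring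
    have hk := key2 M hMpos (f₁ p * (p : ℂ) ^ (-(I * (t₁ : ℂ))))
      (f₂ p * (p : ℂ) ^ (-(I * (t₂ : ℂ)))) (hbound f₁ hf₁ t₁ p hpp) (hbound f₂ hf₂ t₂ p hpp)
    have h2k : (2 : ℝ) ^ (2 * κ) = M ^ 2 := by
      rw [hMdef, ← pow_mul, mul_comm]
    have h2k1 : (2 : ℝ) ^ (κ + 1) = 2 * M := by
      rw [hMdef, pow_succ]; ring
    rw [hsplit, h2k, h2k1, ← hMdef]
    rw [← add_div, ← mul_div_assoc]
    gcongr
  -- step B: monotonicity and conclusion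
  have hm₁ : Dsq κ f₁ t₁ (min x₁ x₂) ≤ Dsq κ f₁ t₁ x₁ := hmono f₁ hf₁ t₁ x₁ (min_le_left _ _)
  have hm₂ : Dsq κ f₂ t₂ (min x₁ x₂) ≤ Dsq κ f₂ t₂ x₂ := hmono f₂ hf₂ t₂ x₂ (min_le_right _ _)
  have hmax₁ : Dsq κ f₁ t₁ x₁ ≤ max (Dsq κ f₁ t₁ x₁) (Dsq κ f₂ t₂ x₂) := le_max_left _ _
  have hmax₂ : Dsq κ f₂ t₂ x₂ ≤ max (Dsq κ f₁ t₁ x₁) (Dsq κ f₂ t₂ x₂) := le_max_right _ _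
  have hpow : (2 : ℝ) ^ (κ + 2) = 2 ^ (κ + 1) * 2 := by rw [pow_succ]
  have h2p : (0 : ℝ) < 2 ^ (κ + 1) := by positivity
  calc Dsq (2 * κ) (fun n => f₁ n * f₂ n) (t₁ + t₂) (min x₁ x₂)
      ≤ 2 ^ (κ + 1) * (Dsq κ f₁ t₁ (min x₁ x₂) + Dsq κ f₂ t₂ (min x₁ x₂)) := stepA
    _ ≤ 2 ^ (κ + 1) * (max (Dsq κ f₁ t₁ x₁) (Dsq κ f₂ t₂ x₂)
          + max (Dsq κ f₁ t₁ x₁) (Dsq κ f₂ t₂ x₂)) := by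
        apply mul_le_mul_of_nonneg_left _ h2p.le
        linarith
    _ = (2 : ℝ) ^ (κ + 2) * max (Dsq κ f₁ t₁ x₁) (Dsq κ f₂ t₂ x₂) := by
        rw [hpow]; ring
end
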